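/- Let ℓ ≥ 1, and let A₁,...,A_r ⊆ C([n],k) be r-cross [ℓ, s-1]-intersecting families with |A₁| ≤ ... ≤ |A_r|. If there exist i ∈ [r-1] and A₁', A₂' ∈ Aᵢ (or A₁' ∈ Aᵢ, A₂' ∈ Aⱼ with i, j ∈ [r-1] distinct) with |A₁' ∩ A₂'| ≤ ℓ-1, then every A ∈ A_r satisfies |A ∩ (A₁' ∪ A₂')| ≥ ℓ + 1, and hence |A_r| ≤ Σ_{t=ℓ+1}^{k} C(|A₁' ∪ A₂'|, t)·C(n - |A₁' ∪ A₂'|, k - t). -/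

import Mathlib

open Finset

theorem stmt15 {n k r ℓ s : ℕ} (hℓ : 1 ≤ ℓ) (hr : 2 ≤ r)
    (𝒜 : Fin r → Finset (Finset (Fin n)))
    (hne : ∀ i, (𝒜 i).Nonempty)
    (hunif : ∀ i, ∀ a ∈ 𝒜 i, a.card = k)
    (hmono : ∀ i j : Fin r, i ≤ j → (𝒜 i).card ≤ (𝒜 j).card)
    (hcross : ∀ f : Fin r → Finset (Fin n), (∀ i, f i ∈ 𝒜 i) →
      (Finset.univ.inf f).card ∈ Finset.Icc ℓ (s - 1))
    (i j : Fin r) (hi : (i : ℕ) < r - 1) (hj : (j : ℕ) < r - 1)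
    (A₁' A₂' : Finset (Fin n)) (hA₁ : A₁' ∈ 𝒜 i) (hA₂ : A₂' ∈ 𝒜 j)
    (hsmall : (A₁' ∩ A₂').card ≤ ℓ - 1) :
    (∀ A ∈ 𝒜 ⟨r - 1, by omega⟩, ℓ + 1 ≤ (A ∩ (A₁' ∪ A₂')).card) ∧
      (𝒜 ⟨r - 1, by omega⟩).card ≤
        ∑ t ∈ Finset.Icc (ℓ + 1) k,
          Nat.choose (A₁' ∪ A₂').card t * Nat.choose (n - (A₁' ∪ A₂').card) (k - t) := by
  classical
  set last : Fin r := ⟨r - 1, by omega⟩ with hlast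
  have hil : i ≠ last := by
    intro h; rw [h] at hi; simp [hlast] at hi
  have hjl : j ≠ last := by
    intro h; rw [h] at hj; simp [hlast] at hj
  -- generic claim
  have gen : ∀ (p : Fin r) (X : Finset (Fin n)), p ≠ last → X ∈ 𝒜 p →
      ∀ A ∈ 𝒜 last, ℓ ≤ (A ∩ X).card := by
    intro p X hp hX A hA
    set f : Fin r → Finset (Fin n) :=
      fun q => if q = last then A else if q = p then X else (hne q).choose with hf
    have hmem : ∀ q, f q ∈ 𝒜 q := by
      intro q
      by_cases h1 : q = last
      · subst h1; simpa [hf] using hA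
      · by_cases h2 : q = p
        · subst h2; simpa [hf, h1] using hX
        · simpa [hf, h1, h2] using (hne q).choose_spec
    have hc := (mem_Icc.1 (hcross f hmem)).1
    have hsub : Finset.univ.inf f ⊆ A ∩ X := by
      have h1 : Finset.univ.inf f ⊆ f last := Finset.inf_le (mem_univ last)
      have h2 : Finset.univ.inf f ⊆ f p := Finset.inf_le (mem_univ p)
      rw [show f last = A by simp [hf]] at h1
      rw [show f p = X by simp [hf, hp]] at h2
      exact fun x hx => mem_inter.2 ⟨h1 hx, h2 hx⟩
    exact le_trans hc (card_le_card hsub)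
  have key : ∀ A ∈ 𝒜 last, ℓ + 1 ≤ (A ∩ (A₁' ∪ A₂')).card := by
    intro A hA
    have h1 := gen i A₁' hil hA₁ A hA
    have h2 := gen j A₂' hjl hA₂ A hA
    have hu : ((A ∩ A₁') ∪ (A ∩ A₂')).card + ((A ∩ A₁') ∩ (A ∩ A₂')).card
        = (A ∩ A₁').card + (A ∩ A₂').card := card_union_add_card_inter _ _
    have e1 : (A ∩ A₁') ∪ (A ∩ A₂') = A ∩ (A₁' ∪ A₂') := (inter_union_distrib_left _ _ _).symm
    have e2 : (A ∩ A₁') ∩ (A ∩ A₂') ⊆ A₁' ∩ A₂' := by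
      intro x hx
      simp only [mem_inter] at hx ⊢
      exact ⟨hx.1.2, hx.2.2⟩
    have h3 : ((A ∩ A₁') ∩ (A ∩ A₂')).card ≤ ℓ - 1 :=
      le_trans (card_le_card e2) hsmall
    rw [e1] at hu
    omega
  refine ⟨key, ?_⟩
  set B := A₁' ∪ A₂' with hB
  have hsplit : (𝒜 last).card =
      ∑ t ∈ Finset.Icc (ℓ + 1) k, ((𝒜 last).filter (fun A => (A ∩ B).card = t)).card := by
    apply card_eq_sum_card_fiberwise
    intro A hA
    simp only [mem_coe, mem_Icc]
    refine ⟨key A hA, ?_⟩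
    calc (A ∩ B).card ≤ A.card := card_le_card inter_subset_left
      _ = k := hunif last A hA
  rw [hsplit]
  apply sum_le_sum
  intro t ht
  rw [mem_Icc] at ht
  have hstep : ((𝒜 last).filter (fun A => (A ∩ B).card = t)).card ≤
      ((powersetCard t B) ×ˢ (powersetCard (k - t) Bᶜ)).card := by
    apply card_le_card_of_injOn (fun A => (A ∩ B, A \ B))
    · intro A hA
      rw [mem_coe, mem_filter] at hA
      have hk : A.card = k := hunif last A hA.1
      rw [mem_coe, mem_product, mem_powersetCard, mem_powersetCard]
      refine ⟨⟨inter_subset_right, hA.2⟩, ⟨?_, ?_⟩⟩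
      · intro x hx
        rw [mem_sdiff] at hx
        simpa using hx.2
      · show (A \ B).card = k - t
        have := card_inter_add_card_sdiff A B
        omega
    · intro a ha b hb hEq
      have h1 : a ∩ B = b ∩ B := congrArg Prod.fst hEq
      have h2 : a \ B = b \ B := congrArg Prod.snd hEq
      ext x
      by_cases hx : x ∈ B
      · constructor <;> intro h
        · exact (mem_inter.1 (h1 ▸ mem_inter.2 ⟨h, hx⟩)).1
        · exact (mem_inter.1 (h1.symm ▸ mem_inter.2 ⟨h, hx⟩)).1
      · constructor <;> intro h
        · exact (mem_sdiff.1 (h2 ▸ mem_sdiff.2 ⟨h, hx⟩)).1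
        · exact (mem_sdiff.1 (h2.symm ▸ mem_sdiff.2 ⟨h, hx⟩)).1
  calc ((𝒜 last).filter (fun A => (A ∩ B).card = t)).card
      ≤ ((powersetCard t B) ×ˢ (powersetCard (k - t) Bᶜ)).card := hstep
    _ = Nat.choose B.card t * Nat.choose (n - B.card) (k - t) := by
        rw [card_product, card_powersetCard, card_powersetCard, card_compl,
          Fintype.card_fin]
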